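/- Let Q ∈ ℝ^{k×k} be symmetric positive semidefinite with Q_{ii} > 0 for every i, let d ∈ ℝ^k with d ≤ 0 componentwise, and let c > 0. Define τ ∈ ℝ^k by τ_i := Q_{ii} / (−d_i + √(d_i² + Q_{ii} c)). Then: (i) τ_i > 0 for every i; (ii) for each i, (τ_i^{−1})² Q_{ii} + 2 τ_i^{−1} d_i = c; and (iii) for every y ∈ ℝ^k with y ≥ 0 componentwise and τᵀy ≤ 1, one has yᵀQy + 2dᵀy ≤ c. (This establishes the validity of Tuy's cut: with c = v_R − δ − v, the maximum of φ(y) = yᵀQy + 2dᵀy + v over the simplex Δ(τ) equals v_R − δ < v_R.) -/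

import Mathlib

open Matrix

noncomputable section

lemma psd_entry_bound {k : ℕ} (Q : Matrix (Fin k) (Fin k) ℝ) (hQ : Q.PosSemidef)
    (i j : Fin k) : Q i j ≤ Real.sqrt (Q i i) * Real.sqrt (Q j j) := by
  have hsym : Q j i = Q i j := by
    have := congrFun (congrFun hQ.1.symm j) i
    simpa [Matrix.conjTranspose_apply] using this
  have hquad : ∀ t : ℝ, 0 ≤ Q i i * (t * t) + (Q i j + Q j i) * t + Q j j := by
    intro t
    have h := hQ.dotProduct_mulVec_nonneg (t • (Pi.single i 1 : Fin k → ℝ) + Pi.single j 1)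
    have he : (t • (Pi.single i 1 : Fin k → ℝ) + Pi.single j 1) ⬝ᵥ
        Q.mulVec (t • (Pi.single i 1 : Fin k → ℝ) + Pi.single j 1)
        = Q i i * (t * t) + (Q i j + Q j i) * t + Q j j := by
      simp [Matrix.mulVec_add, Matrix.mulVec_smul, dotProduct_add,
        add_dotProduct, smul_dotProduct, dotProduct_smul,
        Matrix.mulVec_single, single_dotProduct]
      ring
    simp only [star_trivial] at h
    rw [he] at h
    exact h
  have hdisc := discrim_le_zero hquad
  have hsq : Q i j ^ 2 ≤ Q i i * Q j j := by
    rw [discrim, hsym] at hdisc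
    nlinarith [hdisc]
  calc Q i j ≤ |Q i j| := le_abs_self _
    _ = Real.sqrt ((Q i j) ^ 2) := (Real.sqrt_sq_eq_abs _).symm
    _ ≤ Real.sqrt (Q i i * Q j j) := Real.sqrt_le_sqrt hsq
    _ = Real.sqrt (Q i i) * Real.sqrt (Q j j) :=
        Real.sqrt_mul (by have := hquad 1; have := hquad (-1); nlinarith) _

/-- validity of Tuy's cut: with `τ_i = Q_ii / (−d_i + √(d_i² + Q_ii c))`,
the vector `τ` is positive, the vertices `τ_i⁻¹ e_i` of `Δ(τ)` have objective value
exactly `c`, and the quadratic is at most `c` on the whole simplex `Δ(τ)`. -/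
theorem tuy_cut_valid {k : ℕ} (hk : 1 ≤ k)
    (Q : Matrix (Fin k) (Fin k) ℝ) (hQ : Q.PosSemidef) (hQd : ∀ i, 0 < Q i i)
    (d : Fin k → ℝ) (hd : ∀ i, d i ≤ 0) (c : ℝ) (hc : 0 < c)
    (τ : Fin k → ℝ)
    (hτdef : ∀ i, τ i = Q i i / (-d i + Real.sqrt ((d i) ^ 2 + Q i i * c))) :
    (∀ i, 0 < τ i) ∧
    (∀ i, ((τ i)⁻¹) ^ 2 * Q i i + 2 * (τ i)⁻¹ * d i = c) ∧
    (∀ y : Fin k → ℝ, (∀ i, 0 ≤ y i) → τ ⬝ᵥ y ≤ 1 →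
      y ⬝ᵥ Q.mulVec y + 2 * (d ⬝ᵥ y) ≤ c) := by
  have harg : ∀ i, 0 < (d i) ^ 2 + Q i i * c := fun i => by
    have := hQd i; nlinarith [sq_nonneg (d i)]
  have hden : ∀ i, 0 < -d i + Real.sqrt ((d i) ^ 2 + Q i i * c) := fun i => by
    have h1 := Real.sqrt_pos.mpr (harg i)
    linarith [neg_nonneg.mpr (hd i)]
  have hτpos : ∀ i, 0 < τ i := fun i => by
    rw [hτdef i]; exact div_pos (hQd i) (hden i)
  have hvert : ∀ i, ((τ i)⁻¹) ^ 2 * Q i i + 2 * (τ i)⁻¹ * d i = c := by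
    intro i
    have hinv : (τ i)⁻¹ = (-d i + Real.sqrt ((d i) ^ 2 + Q i i * c)) / Q i i := by
      rw [hτdef i, inv_div]
    have hs : Real.sqrt ((d i) ^ 2 + Q i i * c) ^ 2 = (d i) ^ 2 + Q i i * c :=
      Real.sq_sqrt (harg i).le
    have hQne : Q i i ≠ 0 := (hQd i).ne'
    rw [hinv]
    field_simp
    nlinarith [hs, hQd i]
  refine ⟨hτpos, hvert, fun y hy hty => ?_⟩
  have hbound := psd_entry_bound Q hQ
  set a : Fin k → ℝ := fun i => Real.sqrt (Q i i) with ha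
  set l : Fin k → ℝ := fun i => τ i * y i with hl
  have hl0 : ∀ i, 0 ≤ l i := fun i => mul_nonneg (hτpos i).le (hy i)
  have hls : ∑ i, l i ≤ 1 := by simpa [dotProduct, hl] using hty
  have hyi : ∀ i, y i = (τ i)⁻¹ * l i := fun i => by
    field_simp [hl, (hτpos i).ne']
    rw [hl]; ring
  -- step 1: quadratic form bound
  have h1 : y ⬝ᵥ Q.mulVec y ≤ (∑ i, a i * y i) ^ 2 := by
    have : y ⬝ᵥ Q.mulVec y = ∑ i, ∑ j, y i * (Q i j * y j) := by
      simp [dotProduct, mulVec, Finset.mul_sum]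
    rw [this, sq, Finset.sum_mul_sum]
    refine Finset.sum_le_sum fun i _ => Finset.sum_le_sum fun j _ => ?_
    have := hbound i j
    have hij : y i * (Q i j * y j) ≤ y i * (a i * a j * y j) := by
      have := mul_le_mul_of_nonneg_right (mul_le_mul_of_nonneg_right this (hy j)) (hy i)
      nlinarith [hy i, hy j, hbound i j]
    calc y i * (Q i j * y j) ≤ y i * (a i * a j * y j) := hij
      _ = a i * y i * (a j * y j) := by ring
  -- step 2: Cauchy-Schwarz
  set b : Fin k → ℝ := fun i => a i * (τ i)⁻¹ with hb
  have h2 : (∑ i, a i * y i) = ∑ i, l i * b i := by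
    refine Finset.sum_congr rfl fun i _ => ?_
    rw [hyi i]; ring
  have h3 : (∑ i, l i * b i) ^ 2 ≤ (∑ i, l i) * ∑ i, l i * b i ^ 2 := by
    have := Finset.sum_mul_sq_le_sq_mul_sq Finset.univ
      (fun i => Real.sqrt (l i)) (fun i => Real.sqrt (l i) * b i)
    calc (∑ i, l i * b i) ^ 2
        = (∑ i, Real.sqrt (l i) * (Real.sqrt (l i) * b i)) ^ 2 := by
          congr 1; refine Finset.sum_congr rfl fun i _ => ?_
          simp only [hb]
          linear_combination (-(a i * (τ i)⁻¹)) * Real.mul_self_sqrt (hl0 i)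
      _ ≤ (∑ i, Real.sqrt (l i) ^ 2) * ∑ i, (Real.sqrt (l i) * b i) ^ 2 := this
      _ = (∑ i, l i) * ∑ i, l i * b i ^ 2 := by
          congr 1
          · exact Finset.sum_congr rfl fun i _ => Real.sq_sqrt (hl0 i)
          · refine Finset.sum_congr rfl fun i _ => ?_
            rw [mul_pow, Real.sq_sqrt (hl0 i)]
  have hb2 : ∀ i, l i * b i ^ 2 = l i * (((τ i)⁻¹) ^ 2 * Q i i) := fun i => by
    have : b i ^ 2 = ((τ i)⁻¹) ^ 2 * Q i i := by
      rw [hb, mul_pow, ha, Real.sq_sqrt (hQd i).le]; ring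
    rw [this]
  have hsum3 : (∑ i, l i) * ∑ i, l i * b i ^ 2 ≤ ∑ i, l i * (((τ i)⁻¹) ^ 2 * Q i i) := by
    rw [show ∑ i, l i * b i ^ 2 = ∑ i, l i * (((τ i)⁻¹) ^ 2 * Q i i) from
      Finset.sum_congr rfl fun i _ => hb2 i]
    have hpos : 0 ≤ ∑ i, l i * (((τ i)⁻¹) ^ 2 * Q i i) :=
      Finset.sum_nonneg fun i _ => mul_nonneg (hl0 i) (mul_nonneg (sq_nonneg _) (hQd i).le)
    nlinarith [hls, hpos]
  have hdy : 2 * (d ⬝ᵥ y) = ∑ i, l i * (2 * (τ i)⁻¹ * d i) := by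
    rw [dotProduct, Finset.mul_sum]
    refine Finset.sum_congr rfl fun i _ => ?_
    rw [hyi i]; ring
  calc y ⬝ᵥ Q.mulVec y + 2 * (d ⬝ᵥ y)
      ≤ (∑ i, l i * (((τ i)⁻¹) ^ 2 * Q i i)) + ∑ i, l i * (2 * (τ i)⁻¹ * d i) := by
        rw [hdy]
        have h4 : (∑ i, a i * y i) ^ 2 ≤ ∑ i, l i * (((τ i)⁻¹) ^ 2 * Q i i) := by
          rw [h2]; exact h3.trans hsum3
        linarith [h1.trans h4]
    _ = ∑ i, l i * c := by
        rw [← Finset.sum_add_distrib]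
        refine Finset.sum_congr rfl fun i _ => ?_
        rw [← mul_add, hvert i]
    _ = (∑ i, l i) * c := by rw [← Finset.sum_mul]
    _ ≤ 1 * c := mul_le_mul_of_nonneg_right hls hc.le
    _ = c := one_mul c

end
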